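/- Let k be a natural number and let t, r : (Fin k → WithBot ℕ) → (Fin k → WithBot ℕ) be monotone functions with r (t x) = x for all x (so (t, r) is a retraction of the domain onto itself). Then t is strict: t ⊥ = ⊥, where ⊥ is the everywhere-bottom element. -/

import Mathlib

/-- The flat domain of natural numbers: the carrier is `WithBot ℕ`, ordered so
that `⊥` is below every numeral and distinct numerals are incomparable. -/
def FlatNat : Type := WithBot ℕ

namespace FlatNat

instance : PartialOrder FlatNat where
  le a b := a = (⊥ : WithBot ℕ) ∨ a = b
  le_refl a := Or.inr rfl
  le_trans a b c hab hbc := by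
    rcases hab with h | h
    · exact Or.inl h
    · rw [h]; exact hbc
  le_antisymm a b hab hba := by
    rcases hab with h | h
    · rcases hba with h' | h'
      · rw [h, h']
      · exact h'.symm
    · exact h

instance : OrderBot FlatNat where
  bot := (⊥ : WithBot ℕ)
  bot_le a := Or.inl rfl

end FlatNat

lemma FlatNat.le_iff {a b : FlatNat} : a ≤ b ↔ a = ⊥ ∨ a = b := Iff.rfl

open Classical in
/-- Number of non-bottom coordinates. -/
noncomputable def flatCount {k : ℕ} (x : Fin k → FlatNat) : ℕ :=
  (Finset.univ.filter fun i => x i ≠ ⊥).card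

open Classical in
lemma flatCount_lt {k : ℕ} {x y : Fin k → FlatNat} (h : x < y) :
    flatCount x < flatCount y := by
  apply Finset.card_lt_card
  constructor
  · intro i hi
    simp only [Finset.mem_filter, Finset.mem_univ, true_and] at hi ⊢
    rcases FlatNat.le_iff.mp (h.le i) with hb | he
    · exact absurd hb hi
    · rw [← he]; exact hi
  · intro hsub
    have hne : x ≠ y := h.ne
    obtain ⟨j, hj⟩ := Function.ne_iff.mp hne
    have hxj : x j = ⊥ := by
      rcases FlatNat.le_iff.mp (h.le j) with hb | he
      · exact hb
      · exact absurd he hj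
    have hyj : y j ≠ ⊥ := fun hyb => hj (by rw [hxj, hyb])
    have : j ∈ Finset.univ.filter fun i => y i ≠ ⊥ := by
      simp [hyj]
    have := hsub this
    simp only [Finset.mem_filter, Finset.mem_univ, true_and] at this
    exact this hxj

open Classical in
lemma flatCount_le {k : ℕ} (x : Fin k → FlatNat) : flatCount x ≤ k := by
  calc flatCount x ≤ Finset.univ.card := Finset.card_filter_le _ _
  _ = k := by simp

/-- The chain element with the first `m` coordinates set to `0`. -/
noncomputable def flatChain (k m : ℕ) : Fin k → FlatNat :=
  fun j => if (j : ℕ) < m then ((0 : ℕ) : WithBot ℕ) else (⊥ : FlatNat)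

lemma flatChain_zero (k : ℕ) : flatChain k 0 = ⊥ := by
  funext j
  simp [flatChain]

lemma flatChain_lt (k m : ℕ) (hm : m < k) : flatChain k m < flatChain k (m + 1) := by
  constructor
  · intro j
    by_cases hj : (j : ℕ) < m
    · refine Or.inr ?_
      simp [flatChain, hj, Nat.lt_succ_of_lt hj]
      rfl
    · refine Or.inl ?_
      simp [flatChain, hj]
      rfl
  · intro hle
    have := FlatNat.le_iff.mp (hle ⟨m, hm⟩)
    simp only [flatChain] at this
    rcases this with hb | he
    · simp at hb
      exact (WithBot.coe_ne_bot hb)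
    · simp at he
      exact (WithBot.coe_ne_bot he)

/-- Any retraction of the `k`-fold product of the flat domain of natural
numbers onto itself is strict: the section maps bottom to bottom. -/
theorem retraction_strict (k : ℕ)
    (t r : (Fin k → FlatNat) → (Fin k → FlatNat))
    (ht : Monotone t) (hr : Monotone r) (hret : ∀ x, r (t x) = x) :
    t ⊥ = ⊥ := by
  classical
  -- t is an order embedding
  have tinj : Function.Injective t := fun a b h => by
    rw [← hret a, ← hret b, h]
  have tlt : ∀ {a b : Fin k → FlatNat}, a < b → t a < t b := by
    intro a b h
    exact lt_of_le_of_ne (ht h.le) (fun he => h.ne (tinj he))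
  -- along the chain, flatCount grows
  have key : ∀ m, m ≤ k → m + flatCount (t ⊥) ≤ flatCount (t (flatChain k m)) := by
    intro m
    induction m with
    | zero => intro _; simp [flatChain_zero]
    | succ n ih =>
      intro hmk
      have hn := ih (Nat.le_of_succ_le hmk)
      have hstep := flatCount_lt (tlt (flatChain_lt k n (Nat.lt_of_succ_le hmk)))
      omega
  have hk := key k le_rfl
  have hle := flatCount_le (t (flatChain k k))
  have hzero : flatCount (t ⊥) = 0 := by omega
  -- flatCount (t ⊥) = 0 means every coordinate is ⊥
  funext i
  by_contra hne
  have : i ∈ Finset.univ.filter fun j => t ⊥ j ≠ ⊥ := by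
    simp only [Finset.mem_filter, Finset.mem_univ, true_and]
    exact fun h => hne (by rw [h]; rfl)
  have hpos : 0 < flatCount (t ⊥) := Finset.card_pos.mpr ⟨i, by convert this⟩
  omega
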